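/- Let A, C ∈ ℂ^{n×n} be Hermitian, μ_0 ∈ ℝ, and let λ_0 ∈ ℝ be an eigenvalue of A − μ_0C of multiplicity k. Suppose λ_1, …, λ_k : ℝ → ℝ and x_1, …, x_k : ℝ → ℂ^n satisfy: (A − μC)x_j(μ) = λ_j(μ)x_j(μ) for all μ in a neighborhood of μ_0; each λ_j is differentiable at μ_0 with λ_j(μ_0) = λ_0; each x_j is continuous at μ_0; and the vectors x_1(μ_0), …, x_k(μ_0) are orthonormal (hence form an orthonormal basis of the eigenspace of λ_0 for A − μ_0C). Let X_k = [x_1(μ_0), …, x_k(μ_0)] ∈ ℂ^{n×k}. Then x_i(μ_0)^H C x_j(μ_0) = −λ_j'(μ_0) δ_{ij} for all 1 ≤ i, j ≤ k; equivalently X_k^H C X_k = −diag(λ_1'(μ_0), …, λ_k'(μ_0)), so the derivatives λ_1'(μ_0), …, λ_k'(μ_0) are exactly the eigenvalues of −X_k^H C X_k counting multiplicities. -/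
import Mathlib


open Matrix

/-- The eigenvalues of a Hermitian matrix, sorted in decreasing order:
index `0` is the largest, index `n-1` the smallest. -/
noncomputable def sortedEig {n : ℕ} {M : Matrix (Fin n) (Fin n) ℂ} (hM : M.IsHermitian) :
    Fin n → ℝ :=
  fun i => (hM.eigenvalues ∘ Tuple.sort hM.eigenvalues) i.rev

/-- The parameter matrix `H(μ) = A - μ C`. -/
noncomputable def pencil {n : ℕ} (A C : Matrix (Fin n) (Fin n) ℂ) (μ : ℝ) :
    Matrix (Fin n) (Fin n) ℂ :=
  A - (μ : ℂ) • C

theorem pencil_isHermitian {n : ℕ} {A C : Matrix (Fin n) (Fin n) ℂ}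
    (hA : A.IsHermitian) (hC : C.IsHermitian) (μ : ℝ) :
    (pencil A C μ).IsHermitian := by
  unfold pencil
  refine hA.sub ?_
  unfold Matrix.IsHermitian at *
  rw [Matrix.conjTranspose_smul, hC]
  simp

/-- `(μ, λ, x)` is a 2D-eigentriple of the pair `(A, C)`:
`(A - μC)x = λx`, `xᴴCx = 0` and `xᴴx = 1`. -/
def Is2DEigentriple {n : ℕ} (A C : Matrix (Fin n) (Fin n) ℂ) (μ lam : ℝ)
    (x : Fin n → ℂ) : Prop :=
  (A - (μ : ℂ) • C) *ᵥ x = (lam : ℂ) • x ∧ star x ⬝ᵥ (C *ᵥ x) = 0 ∧ star x ⬝ᵥ x = 1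

/-- `(μ, λ)` is a 2D-eigenvalue of the pair `(A, C)`. -/
def Is2DEigenvalue {n : ℕ} (A C : Matrix (Fin n) (Fin n) ℂ) (μ lam : ℝ) : Prop :=
  ∃ x : Fin n → ℂ, Is2DEigentriple A C μ lam x

/-- A Hermitian matrix is indefinite: it has a positive and a negative eigenvalue. -/
def IsIndefinite {n : ℕ} {M : Matrix (Fin n) (Fin n) ℂ} (hM : M.IsHermitian) : Prop :=
  (∃ i, 0 < hM.eigenvalues i) ∧ (∃ j, hM.eigenvalues j < 0)

/-- Let `A, C` be Hermitian, `μ₀ ∈ ℝ`, and `lam₀` an eigenvalue of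
`A - μ₀C` of multiplicity `k`.  Given differentiable eigenvalue functions
`lam j` and continuous eigenvector functions `x j` (for `j = 1, …, k`) with
`(A - μC) (x j μ) = (lam j μ) (x j μ)` near `μ₀`, `lam j μ₀ = lam₀`, and
`x 1 μ₀, …, x k μ₀` orthonormal, one has
`(x i μ₀)ᴴ C (x j μ₀) = -(lam j)'(μ₀) δᵢⱼ`, i.e. `X_kᴴ C X_k` is the diagonal
matrix of the `-(lam j)'(μ₀)`; hence the derivatives `(lam j)'(μ₀)` are exactly
the eigenvalues of `-X_kᴴ C X_k` counting multiplicities. -/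
theorem derivatives_of_eigencurves_at_multiple_eigenvalue
    {n k : ℕ} (A C : Matrix (Fin n) (Fin n) ℂ)
    (hA : A.IsHermitian) (hC : C.IsHermitian) (μ₀ lam₀ : ℝ)
    (hmult : Module.finrank ℂ
      (Module.End.eigenspace (Matrix.mulVecLin (A - (μ₀ : ℂ) • C)) (lam₀ : ℂ)) = k)
    (lam : Fin k → ℝ → ℝ) (x : Fin k → ℝ → (Fin n → ℂ))
    (heig : ∀ j : Fin k, ∀ᶠ μ : ℝ in nhds μ₀,
      (A - (μ : ℂ) • C) *ᵥ x j μ = (lam j μ : ℂ) • x j μ)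
    (hdiff : ∀ j : Fin k, DifferentiableAt ℝ (lam j) μ₀)
    (hval : ∀ j : Fin k, lam j μ₀ = lam₀)
    (hcont : ∀ j : Fin k, ContinuousAt (x j) μ₀)
    (horth : ∀ i j : Fin k, star (x i μ₀) ⬝ᵥ x j μ₀ = if i = j then 1 else 0) :
    ∀ i j : Fin k, star (x i μ₀) ⬝ᵥ (C *ᵥ x j μ₀) =
      if i = j then -((deriv (lam j) μ₀ : ℝ) : ℂ) else 0 := by
  intro i j
  set u : Fin n → ℂ := x i μ₀ with hu
  set L : ℝ := deriv (lam j) μ₀ with hL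
  set g : ℝ → ℂ := fun μ => star u ⬝ᵥ x j μ with hg
  set f : ℝ → ℂ := fun μ => star u ⬝ᵥ (C *ᵥ x j μ) with hf
  have herm : (A - (μ₀ : ℂ) • C).IsHermitian := pencil_isHermitian hA hC μ₀
  have h0 : (A - (μ₀ : ℂ) • C) *ᵥ u = (lam₀ : ℂ) • u := by
    have := (heig i).self_of_nhds
    rwa [hval i] at this
  -- key algebraic identity
  have key : ∀ μ : ℝ, (A - (μ : ℂ) • C) *ᵥ x j μ = (lam j μ : ℂ) • x j μ →
      ((μ : ℂ) - (μ₀ : ℂ)) * f μ = ((lam₀ : ℂ) - (lam j μ : ℂ)) * g μ := by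
    intro μ hμ
    have hH : star u ⬝ᵥ ((A - (μ₀ : ℂ) • C) *ᵥ x j μ) = (lam₀ : ℂ) * g μ := by
      rw [Matrix.dotProduct_mulVec]
      have : star u ᵥ* (A - (μ₀ : ℂ) • C) = star ((A - (μ₀ : ℂ) • C) *ᵥ u) := by
        rw [Matrix.star_mulVec, herm]
      rw [this, h0]
      simp [hg, smul_dotProduct, smul_eq_mul]
    have hexpand : (A - (μ : ℂ) • C) = (A - (μ₀ : ℂ) • C) - (((μ : ℂ) - (μ₀ : ℂ)) • C) := by
      rw [sub_smul]; abel
    have h1 : star u ⬝ᵥ ((A - (μ : ℂ) • C) *ᵥ x j μ)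
        = (lam₀ : ℂ) * g μ - ((μ : ℂ) - (μ₀ : ℂ)) * f μ := by
      rw [hexpand, Matrix.sub_mulVec, dotProduct_sub, hH,
        Matrix.smul_mulVec, dotProduct_smul, smul_eq_mul]
    have h2 : star u ⬝ᵥ ((A - (μ : ℂ) • C) *ᵥ x j μ) = (lam j μ : ℂ) * g μ := by
      rw [hμ, dotProduct_smul, smul_eq_mul]
    rw [h1] at h2
    linear_combination -h2
  -- continuity of f and g
  have hgc : ContinuousAt g μ₀ :=
    (continuous_const.dotProduct continuous_id).continuousAt.comp (hcont j)
  have hfc : ContinuousAt f μ₀ :=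
    (continuous_const.dotProduct
      (continuous_const.matrix_mulVec continuous_id)).continuousAt.comp (hcont j)
  -- slope tendsto
  have hslope : Filter.Tendsto (slope (lam j) μ₀) (nhdsWithin μ₀ {μ₀}ᶜ) (nhds L) :=
    hasDerivAt_iff_tendsto_slope.mp (hdiff j).hasDerivAt
  -- eventual equality on the punctured neighborhood
  have hev : ∀ᶠ μ in nhdsWithin μ₀ {μ₀}ᶜ,
      f μ = -((slope (lam j) μ₀ μ : ℝ) : ℂ) * g μ := by
    filter_upwards [nhdsWithin_le_nhds (heig j), self_mem_nhdsWithin] with μ hμ hne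
    have hk := key μ hμ
    have hne' : ((μ : ℂ) - (μ₀ : ℂ)) ≠ 0 := by
      simp only [ne_eq, sub_eq_zero]
      exact_mod_cast hne
    rw [slope_def_field, hval j]
    push_cast
    field_simp
    linear_combination hk
  -- limits
  have hlim1 : Filter.Tendsto f (nhdsWithin μ₀ {μ₀}ᶜ) (nhds (f μ₀)) :=
    hfc.continuousWithinAt.tendsto
  have hlim2 : Filter.Tendsto f (nhdsWithin μ₀ {μ₀}ᶜ) (nhds (-(L : ℂ) * g μ₀)) := by
    have hgt : Filter.Tendsto g (nhdsWithin μ₀ {μ₀}ᶜ) (nhds (g μ₀)) :=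
      hgc.continuousWithinAt.tendsto
    have hst : Filter.Tendsto (fun μ => -((slope (lam j) μ₀ μ : ℝ) : ℂ))
        (nhdsWithin μ₀ {μ₀}ᶜ) (nhds (-(L : ℂ))) := by
      exact ((Complex.continuous_ofReal.tendsto L).comp hslope).neg
    have := hst.mul hgt
    exact this.congr' (by filter_upwards [hev] with μ h using h.symm)
  have hfeq : f μ₀ = -(L : ℂ) * g μ₀ := tendsto_nhds_unique hlim1 hlim2
  have hgval : g μ₀ = if i = j then 1 else 0 := horth i j
  rw [show star u ⬝ᵥ (C *ᵥ x j μ₀) = f μ₀ from rfl, hfeq, hgval]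
  by_cases h : i = j <;> simp [h]
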